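/- Let N ≥ 3, Φ ∈ ℝ^{N²×m}, p₀ ∈ ℝ^{N²}, and define F(A) = [I − Φ(ΦᵀΔ(A)ᵀΔ(A)Φ)⁻¹ΦᵀΔ(A)ᵀΔ(A)] p₀ for N×N real matrices A such that ΦᵀΔ(A)ᵀΔ(A)Φ is invertible. Let Q, P be N×N real matrices with p = vec(P) satisfying: Δ(Q)Φ has full column rank, p = p₀ + Φβ* for some β*, and Δ(Q)p = 0. Then F is (Fréchet) differentiable at Q, and its derivative is the linear map H ↦ Φ (ΦᵀΔ(Q)ᵀΔ(Q)Φ)⁻¹ ΦᵀΔ(Q)ᵀ Δ(P) vec(H). -/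

import Mathlib

open Matrix Kronecker

attribute [local instance] Matrix.normedAddCommGroup Matrix.normedSpace

/-- Column-stacking vectorization: `vec(A)_{(j,i)} = A_{i,j}`. -/
def vecM {N : ℕ} (A : Matrix (Fin N) (Fin N) ℝ) : Fin N × Fin N → ℝ :=
  fun p => A p.2 p.1

/-- `Δ(A) = I ⊗ A − Aᵀ ⊗ I`. -/
noncomputable def Delta {N : ℕ} (A : Matrix (Fin N) (Fin N) ℝ) :
    Matrix (Fin N × Fin N) (Fin N × Fin N) ℝ :=
  (1 : Matrix (Fin N) (Fin N) ℝ) ⊗ₖ A - Aᵀ ⊗ₖ (1 : Matrix (Fin N) (Fin N) ℝ)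

section Aux

variable {l n o : Type*} [Fintype l] [Fintype n] [Fintype o]

lemma stmt13_isBoundedBilinearMap_mul :
    IsBoundedBilinearMap ℝ fun p : Matrix l n ℝ × Matrix n o ℝ => p.1 * p.2 where
  add_left x₁ x₂ y := Matrix.add_mul x₁ x₂ y
  smul_left c x y := Matrix.smul_mul c x y
  add_right x y₁ y₂ := Matrix.mul_add x y₁ y₂
  smul_right c x y := Matrix.mul_smul x c y
  bound := by
    refine ⟨Fintype.card n + 1, by positivity, fun x y => ?_⟩
    rw [Matrix.norm_le_iff (by positivity)]
    intro i j
    rw [Matrix.mul_apply]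
    calc ‖∑ k, x i k * y k j‖ ≤ ∑ k, ‖x i k * y k j‖ := norm_sum_le _ _
      _ ≤ ∑ _k : n, ‖x‖ * ‖y‖ := by
          refine Finset.sum_le_sum fun k _ => ?_
          rw [norm_mul]
          exact mul_le_mul (Matrix.norm_entry_le_entrywise_sup_norm x)
            (Matrix.norm_entry_le_entrywise_sup_norm y) (norm_nonneg _) (norm_nonneg _)
      _ = (Fintype.card n : ℝ) * (‖x‖ * ‖y‖) := by
          rw [Finset.sum_const, Finset.card_univ, nsmul_eq_mul]
      _ ≤ (↑(Fintype.card n) + 1) * ‖x‖ * ‖y‖ := by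
          have h1 : (0:ℝ) ≤ ‖x‖ := norm_nonneg _
          have h2 : (0:ℝ) ≤ ‖y‖ := norm_nonneg _
          nlinarith

/-- Entry evaluation as a continuous linear map. -/
noncomputable def entryCLM (i j : n) : Matrix n n ℝ →L[ℝ] ℝ :=
  LinearMap.toContinuousLinearMap
    { toFun := fun A => A i j
      map_add' := fun _ _ => rfl
      map_smul' := fun _ _ => rfl }

@[simp] lemma entryCLM_apply (i j : n) (A : Matrix n n ℝ) : entryCLM i j A = A i j := rfl

/-- Left multiplication by a fixed matrix, as a continuous linear map. -/
noncomputable def mulLeftCLM (B : Matrix l n ℝ) : Matrix n o ℝ →L[ℝ] Matrix l o ℝ :=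
  LinearMap.toContinuousLinearMap
    { toFun := fun X => B * X
      map_add' := fun X Y => Matrix.mul_add B X Y
      map_smul' := fun c X => Matrix.mul_smul B c X }

@[simp] lemma mulLeftCLM_apply (B : Matrix l n ℝ) (X : Matrix n o ℝ) :
    mulLeftCLM B X = B * X := rfl

/-- Right multiplication by a fixed matrix, as a continuous linear map. -/
noncomputable def mulRightCLM (C : Matrix n o ℝ) : Matrix l n ℝ →L[ℝ] Matrix l o ℝ :=
  LinearMap.toContinuousLinearMap
    { toFun := fun X => X * C
      map_add' := fun X Y => Matrix.add_mul X Y C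
      map_smul' := fun c X => Matrix.smul_mul c X C }

@[simp] lemma mulRightCLM_apply (C : Matrix n o ℝ) (X : Matrix l n ℝ) :
    mulRightCLM C X = X * C := rfl

/-- Transpose as a continuous linear map. -/
noncomputable def transposeCLM : Matrix l n ℝ →L[ℝ] Matrix n l ℝ :=
  LinearMap.toContinuousLinearMap
    { toFun := fun X => Xᵀ
      map_add' := fun X Y => Matrix.transpose_add X Y
      map_smul' := fun c X => Matrix.transpose_smul c X }

@[simp] lemma transposeCLM_apply (X : Matrix l n ℝ) : (transposeCLM X : Matrix n l ℝ) = Xᵀ := rfl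

/-- `mulVec` with a fixed vector, as a continuous linear map in the matrix. -/
noncomputable def mulVecCLM (v : n → ℝ) : Matrix l n ℝ →L[ℝ] (l → ℝ) :=
  LinearMap.toContinuousLinearMap
    { toFun := fun X => X.mulVec v
      map_add' := fun X Y => Matrix.add_mulVec X Y v
      map_smul' := fun c X => by ext i; simp [Matrix.smul_mulVec] }

@[simp] lemma mulVecCLM_apply (v : n → ℝ) (X : Matrix l n ℝ) : mulVecCLM v X = X.mulVec v := rfl

/-- Product rule for matrix-valued functions. -/
theorem HasFDerivAt.matMul {E : Type*} [NormedAddCommGroup E] [NormedSpace ℝ E]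
    {f : E → Matrix l n ℝ} {g : E → Matrix n o ℝ}
    {f' : E →L[ℝ] Matrix l n ℝ} {g' : E →L[ℝ] Matrix n o ℝ} {x : E}
    (hf : HasFDerivAt f f' x) (hg : HasFDerivAt g g' x) :
    HasFDerivAt (fun y => f y * g y)
      ((mulRightCLM (g x)).comp f' + (mulLeftCLM (f x)).comp g') x := by
  have h := ((stmt13_isBoundedBilinearMap_mul (l := l) (n := n) (o := o)).hasFDerivAt (f x, g x)).comp x (hf.prodMk hg)
  refine h.congr_fderiv ?_
  ext H
  simp [IsBoundedBilinearMap.deriv_apply, add_comm]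
  exact add_comm _ _

lemma stmt13_differentiable_det [DecidableEq n] :
    Differentiable ℝ fun A : Matrix n n ℝ => A.det := by
  have : (fun A : Matrix n n ℝ => A.det)
      = fun A => ∑ σ : Equiv.Perm n, (Equiv.Perm.sign σ : ℝ) * ∏ i, A (σ i) i := by
    funext A; rw [Matrix.det_apply']
  rw [this]
  apply Differentiable.fun_sum
  intro σ _
  have hprod : Differentiable ℝ fun A : Matrix n n ℝ => ∏ i, A (σ i) i := by
    intro A
    have h := HasFDerivAt.finset_prod (u := Finset.univ)
      (g := fun (i : n) (A : Matrix n n ℝ) => A (σ i) i)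
      (g' := fun i : n => entryCLM (σ i) i) (x := A)
      (fun i _ => (entryCLM (σ i) i).hasFDerivAt)
    exact h.differentiableAt
  exact (differentiable_const _).mul hprod

lemma stmt13_differentiable_updateRow [DecidableEq n] (j : n) (c : n → ℝ) :
    Differentiable ℝ fun A : Matrix n n ℝ => A.updateRow j c := by
  have hkey : (fun A : Matrix n n ℝ => A.updateRow j c)
      = fun A => A.updateRow j 0 + (0 : Matrix n n ℝ).updateRow j c := by
    funext A; ext k l
    by_cases h : k = j <;> simp [Matrix.updateRow_apply, h]
  rw [hkey]
  refine Differentiable.add_const _ ?_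
  exact (LinearMap.toContinuousLinearMap
    { toFun := fun A : Matrix n n ℝ => A.updateRow j 0
      map_add' := fun A B => by
        ext k l; by_cases h : k = j <;> simp [Matrix.updateRow_apply, h]
      map_smul' := fun cc A => by
        ext k l; by_cases h : k = j <;> simp [Matrix.updateRow_apply, h] }).differentiable

lemma stmt13_differentiable_adjugate [DecidableEq n] :
    Differentiable ℝ fun A : Matrix n n ℝ => A.adjugate := by
  have : (fun A : Matrix n n ℝ => Matrix.adjugate A)
      = fun A : Matrix n n ℝ =>
          ∑ p : n × n, (Matrix.adjugate A p.1 p.2) • Matrix.single p.1 p.2 (1:ℝ) := by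
    funext A
    ext i j
    rw [Matrix.sum_apply]
    simp [Matrix.single, Matrix.smul_apply, Fintype.sum_prod_type, ite_and,
      Finset.sum_ite_eq, Finset.sum_ite_eq']
  rw [this]
  refine Differentiable.fun_sum fun p _ => Differentiable.smul_const ?_ _
  have : (fun A : Matrix n n ℝ => Matrix.adjugate A p.1 p.2)
      = fun A : Matrix n n ℝ => (A.updateRow p.2 (Pi.single p.1 1)).det := by
    funext A; rw [Matrix.adjugate_apply]
  rw [this]
  exact stmt13_differentiable_det.comp (stmt13_differentiable_updateRow _ _)

lemma stmt13_differentiableAt_inv [DecidableEq n] {A₀ : Matrix n n ℝ} (h : A₀.det ≠ 0) :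
    DifferentiableAt ℝ (fun A : Matrix n n ℝ => A⁻¹) A₀ := by
  have hdet : ContinuousAt (fun A : Matrix n n ℝ => A.det) A₀ :=
    stmt13_differentiable_det.continuous.continuousAt
  have hev : (fun A : Matrix n n ℝ => (A.det)⁻¹ • A.adjugate) =ᶠ[nhds A₀] fun A => A⁻¹ := by
    filter_upwards [hdet.eventually_ne h] with A hA
    rw [Matrix.inv_def, Ring.inverse_eq_inv']
  refine DifferentiableAt.congr_of_eventuallyEq ?_ hev.symm
  exact ((stmt13_differentiable_det A₀).inv h).smul (stmt13_differentiable_adjugate A₀)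

end Aux

lemma stmt13_delta_mulVec {N : ℕ} (H X : Matrix (Fin N) (Fin N) ℝ) :
    (Delta H).mulVec (vecM X) = vecM (H * X - X * H) := by
  funext q
  obtain ⟨a, b⟩ := q
  simp only [Delta, vecM, Matrix.mulVec, dotProduct, Matrix.sub_apply,
    Matrix.kroneckerMap_apply, Matrix.one_apply, Matrix.transpose_apply,
    Fintype.sum_prod_type, Matrix.mul_apply, sub_mul, ite_mul, one_mul, zero_mul]
  rw [Finset.sum_comm]
  simp [Finset.sum_sub_distrib, Finset.sum_ite_eq, Finset.sum_ite_eq', mul_comm]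

/-- With `F(A) = [I − Φ(ΦᵀΔ(A)ᵀΔ(A)Φ)⁻¹ΦᵀΔ(A)ᵀΔ(A)]p₀`, if `Δ(Q)Φ` has
full column rank, `vec(P) = p₀ + Φβ*` for some `β*` and `Δ(Q) vec(P) = 0`, then `F` is
Fréchet differentiable at `Q` with derivative
`H ↦ Φ(ΦᵀΔ(Q)ᵀΔ(Q)Φ)⁻¹ΦᵀΔ(Q)ᵀΔ(P) vec(H)`. -/
theorem stmt_13 (N m : ℕ) (hN : 3 ≤ N)
    (Φ : Matrix (Fin N × Fin N) (Fin m) ℝ) (p₀ : Fin N × Fin N → ℝ)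
    (F : Matrix (Fin N) (Fin N) ℝ → (Fin N × Fin N → ℝ))
    (hF : ∀ A, F A =
      ((1 : Matrix (Fin N × Fin N) (Fin N × Fin N) ℝ)
        - Φ * (Φᵀ * (Delta A)ᵀ * Delta A * Φ)⁻¹
            * (Φᵀ * (Delta A)ᵀ * Delta A)).mulVec p₀)
    (Q P : Matrix (Fin N) (Fin N) ℝ)
    (hrank : Function.Injective fun x : Fin m → ℝ => (Delta Q * Φ).mulVec x)
    (hβ : ∃ β : Fin m → ℝ, vecM P = p₀ + Φ.mulVec β)
    (hker : (Delta Q).mulVec (vecM P) = 0) :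
    ∃ L : Matrix (Fin N) (Fin N) ℝ →L[ℝ] (Fin N × Fin N → ℝ),
      HasFDerivAt F L Q ∧
      ∀ H : Matrix (Fin N) (Fin N) ℝ,
        L H = (Φ * (Φᵀ * (Delta Q)ᵀ * Delta Q * Φ)⁻¹
                * Φᵀ * (Delta Q)ᵀ * Delta P).mulVec (vecM H) := by
  classical
  obtain ⟨β, hβ⟩ := hβ
  -- Delta as a continuous linear map
  let Dl : Matrix (Fin N) (Fin N) ℝ →L[ℝ] Matrix (Fin N × Fin N) (Fin N × Fin N) ℝ :=
    LinearMap.toContinuousLinearMap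
      { toFun := Delta
        map_add' := fun A B => by
          simp only [Delta, Matrix.add_kronecker, Matrix.kronecker_add, Matrix.transpose_add]
          abel
        map_smul' := fun c A => by
          simp only [Delta, Matrix.smul_kronecker, Matrix.kronecker_smul, Matrix.transpose_smul,
            smul_sub, RingHom.id_apply] }
  have hDlapp : ∀ A, Dl A = Delta A := fun _ => rfl
  have hDelta : HasFDerivAt Delta Dl Q := Dl.hasFDerivAt
  -- derivative of A ↦ Φᵀ * (Delta A)ᵀ
  have h1 : HasFDerivAt (fun A => Φᵀ * (Delta A)ᵀ)
      ((mulLeftCLM (o := Fin N × Fin N) Φᵀ).comp ((transposeCLM).comp Dl)) Q :=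
    ((mulLeftCLM (o := Fin N × Fin N) Φᵀ).comp ((transposeCLM).comp Dl)).hasFDerivAt
  -- derivative of A ↦ Φᵀ * (Delta A)ᵀ * Delta A
  have hh := h1.matMul hDelta
  -- derivative of Mf : A ↦ Φᵀ * (Delta A)ᵀ * Delta A * Φ
  have hM := hh.matMul (hasFDerivAt_const Φ Q)
  -- invertibility of Mf Q
  have hMQeq : Φᵀ * (Delta Q)ᵀ * Delta Q * Φ = (Delta Q * Φ)ᵀ * (Delta Q * Φ) := by
    rw [Matrix.transpose_mul]
    simp only [Matrix.mul_assoc]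
  have hMQunit : IsUnit (Φᵀ * (Delta Q)ᵀ * Delta Q * Φ) := by
    rw [← Matrix.mulVec_injective_iff_isUnit]
    intro x y hxy
    have hsub : (Φᵀ * (Delta Q)ᵀ * Delta Q * Φ) *ᵥ (x - y) = 0 := by
      rw [Matrix.mulVec_sub, hxy, sub_self]
    have hdot : ((Delta Q * Φ) *ᵥ (x - y)) ⬝ᵥ ((Delta Q * Φ) *ᵥ (x - y)) = 0 := by
      have h0 := congrArg (fun v => (x - y) ⬝ᵥ v) hsub
      simpa [hMQeq, ← Matrix.mulVec_mulVec, Matrix.dotProduct_mulVec,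
        Matrix.vecMul_transpose] using h0
    have hz : (Delta Q * Φ) *ᵥ (x - y) = 0 := dotProduct_self_eq_zero.mp hdot
    have h5 : x - y = 0 := hrank (by simpa [Matrix.mulVec_zero] using hz)
    exact sub_eq_zero.mp h5
  have hdet : IsUnit (Φᵀ * (Delta Q)ᵀ * Delta Q * Φ).det :=
    (Matrix.isUnit_iff_isUnit_det _).mp hMQunit
  have hdetne : (Φᵀ * (Delta Q)ᵀ * Delta Q * Φ).det ≠ 0 := by
    simpa [isUnit_iff_ne_zero] using hdet
  -- g : A ↦ (Mf A)⁻¹ is differentiable at Q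
  have hgdiff : DifferentiableAt ℝ (fun A => (Φᵀ * (Delta A)ᵀ * Delta A * Φ)⁻¹) Q :=
    (stmt13_differentiableAt_inv hdetne).comp Q hM.differentiableAt
  have hg : HasFDerivAt (fun A => (Φᵀ * (Delta A)ᵀ * Delta A * Φ)⁻¹)
      (fderiv ℝ (fun A => (Φᵀ * (Delta A)ᵀ * Delta A * Φ)⁻¹) Q) Q := hgdiff.hasFDerivAt
  -- eventually, (Mf A)⁻¹ * Mf A = 1
  have hcont : ContinuousAt (fun A => (Φᵀ * (Delta A)ᵀ * Delta A * Φ).det) Q :=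
    (stmt13_differentiable_det.continuous.continuousAt).comp hM.differentiableAt.continuousAt
  have hev : ∀ᶠ A in nhds Q,
      (fun A => (Φᵀ * (Delta A)ᵀ * Delta A * Φ)⁻¹ * (Φᵀ * (Delta A)ᵀ * Delta A * Φ)) A
        = (fun _ => (1 : Matrix (Fin m) (Fin m) ℝ)) A := by
    filter_upwards [hcont.eventually_ne hdetne] with A hA
    exact Matrix.nonsing_inv_mul _ (isUnit_iff_ne_zero.mpr hA)
  have hzero : HasFDerivAt
      (fun A => (Φᵀ * (Delta A)ᵀ * Delta A * Φ)⁻¹ * (Φᵀ * (Delta A)ᵀ * Delta A * Φ))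
      (0 : _ →L[ℝ] Matrix (Fin m) (Fin m) ℝ) Q :=
    (hasFDerivAt_const (1 : Matrix (Fin m) (Fin m) ℝ) Q).congr_of_eventuallyEq hev
  have hprod := hg.matMul hM
  have huniq := hprod.unique hzero
  -- pointwise formula for the derivative of the inverse
  have hg' : ∀ H, fderiv ℝ (fun A => (Φᵀ * (Delta A)ᵀ * Delta A * Φ)⁻¹) Q H
      = -((Φᵀ * (Delta Q)ᵀ * Delta Q * Φ)⁻¹
          * ((Φᵀ * (Delta H)ᵀ * Delta Q + Φᵀ * (Delta Q)ᵀ * Delta H) * Φ)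
          * (Φᵀ * (Delta Q)ᵀ * Delta Q * Φ)⁻¹) := by
    intro H
    have h0 := ContinuousLinearMap.ext_iff.mp huniq H
    simp only [ContinuousLinearMap.add_apply, ContinuousLinearMap.comp_apply,
      ContinuousLinearMap.coe_comp', Function.comp_apply, ContinuousLinearMap.zero_apply,
      mulLeftCLM_apply, mulRightCLM_apply, transposeCLM_apply, hDlapp, Matrix.mul_zero,
      add_zero] at h0
    replace h0 : fderiv ℝ (fun A => (Φᵀ * (Delta A)ᵀ * Delta A * Φ)⁻¹) Q H
        * (Φᵀ * (Delta Q)ᵀ * Delta Q * Φ) + (Φᵀ * (Delta Q)ᵀ * Delta Q * Φ)⁻¹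
        * ((Φᵀ * (Delta H)ᵀ * Delta Q + Φᵀ * (Delta Q)ᵀ * Delta H) * Φ
          + Φᵀ * (Delta Q)ᵀ * Delta Q * (0 : Matrix (Fin N × Fin N) (Fin m) ℝ)) = 0 := h0
    rw [Matrix.mul_zero, add_zero] at h0
    have h1' := eq_neg_of_add_eq_zero_left h0
    calc fderiv ℝ (fun A => (Φᵀ * (Delta A)ᵀ * Delta A * Φ)⁻¹) Q H
        = fderiv ℝ (fun A => (Φᵀ * (Delta A)ᵀ * Delta A * Φ)⁻¹) Q H
          * ((Φᵀ * (Delta Q)ᵀ * Delta Q * Φ) * (Φᵀ * (Delta Q)ᵀ * Delta Q * Φ)⁻¹) := by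
          rw [Matrix.mul_nonsing_inv _ hdet, Matrix.mul_one]
      _ = (fderiv ℝ (fun A => (Φᵀ * (Delta A)ᵀ * Delta A * Φ)⁻¹) Q H
          * (Φᵀ * (Delta Q)ᵀ * Delta Q * Φ)) * (Φᵀ * (Delta Q)ᵀ * Delta Q * Φ)⁻¹ := by
          rw [← Matrix.mul_assoc]
      _ = -((Φᵀ * (Delta Q)ᵀ * Delta Q * Φ)⁻¹
          * ((Φᵀ * (Delta H)ᵀ * Delta Q + Φᵀ * (Delta Q)ᵀ * Delta H) * Φ)
          * (Φᵀ * (Delta Q)ᵀ * Delta Q * Φ)⁻¹) := by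
          rw [h1', Matrix.neg_mul]
  -- assemble the derivative of F
  have hk : HasFDerivAt (fun A => Φ * (Φᵀ * (Delta A)ᵀ * Delta A * Φ)⁻¹)
      ((mulLeftCLM (l := Fin N × Fin N) Φ).comp
        (fderiv ℝ (fun A => (Φᵀ * (Delta A)ᵀ * Delta A * Φ)⁻¹) Q)) Q :=
    by
    have h7 := ((mulLeftCLM (l := Fin N × Fin N) (o := Fin m) Φ).hasFDerivAt
        (x := (Φᵀ * (Delta Q)ᵀ * Delta Q * Φ)⁻¹)).comp Q hg
    exact h7.congr_of_eventuallyEq (Filter.Eventually.of_forall fun A => rfl)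
  have he := hk.matMul hh
  have hexpr := he.const_sub (1 : Matrix (Fin N × Fin N) (Fin N × Fin N) ℝ)
  have h8 := ((mulVecCLM p₀).hasFDerivAt
      (x := (1 : Matrix (Fin N × Fin N) (Fin N × Fin N) ℝ)
        - Φ * (Φᵀ * (Delta Q)ᵀ * Delta Q * Φ)⁻¹ * (Φᵀ * (Delta Q)ᵀ * Delta Q))).comp Q hexpr
  have hFeq : F = fun A => ((1 : Matrix (Fin N × Fin N) (Fin N × Fin N) ℝ)
        - Φ * (Φᵀ * (Delta A)ᵀ * Delta A * Φ)⁻¹ * (Φᵀ * (Delta A)ᵀ * Delta A)).mulVec p₀ :=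
    funext hF
  rw [hFeq]
  refine ⟨_, h8.congr_of_eventuallyEq (Filter.Eventually.of_forall fun A => rfl), fun H => ?_⟩
  -- vector facts
  have fact0 : (Φᵀ * (Delta Q)ᵀ * Delta Q * Φ)⁻¹ * (Φᵀ * (Delta Q)ᵀ * Delta Q * Φ) = 1 :=
    Matrix.nonsing_inv_mul _ hdet
  have n3 : ∀ v, (Φᵀ * (Delta Q)ᵀ * Delta Q * Φ)⁻¹ *ᵥ
      (Φᵀ *ᵥ ((Delta Q)ᵀ *ᵥ (Delta Q *ᵥ (Φ *ᵥ v)))) = v := by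
    intro v
    have h6 : (Φᵀ * (Delta Q)ᵀ * Delta Q * Φ)⁻¹ *ᵥ ((Φᵀ * (Delta Q)ᵀ * Delta Q * Φ) *ᵥ v) = v := by
      rw [Matrix.mulVec_mulVec, fact0, Matrix.one_mulVec]
    simpa only [← Matrix.mulVec_mulVec] using h6
  have n2 : Delta Q *ᵥ p₀ = -(Delta Q *ᵥ (Φ *ᵥ β)) := by
    have h0 : Delta Q *ᵥ (p₀ + Φ *ᵥ β) = 0 := by rw [← hβ]; exact hker
    rw [Matrix.mulVec_add] at h0
    exact eq_neg_of_add_eq_zero_left h0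
  have n4 : Delta H *ᵥ vecM P = -(Delta P *ᵥ vecM H) := by
    rw [stmt13_delta_mulVec, stmt13_delta_mulVec]
    funext q
    simp only [vecM, Matrix.sub_apply, Pi.neg_apply]
    ring
  have hp₀ : p₀ = vecM P - Φ *ᵥ β := by rw [hβ]; abel
  change (-(Φ * fderiv ℝ (fun A => (Φᵀ * (Delta A)ᵀ * Delta A * Φ)⁻¹) Q H
      * (Φᵀ * (Delta Q)ᵀ * Delta Q) + Φ * (Φᵀ * (Delta Q)ᵀ * Delta Q * Φ)⁻¹
      * (Φᵀ * (Delta H)ᵀ * Delta Q + Φᵀ * (Delta Q)ᵀ * Delta H))) *ᵥ p₀ = _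
  rw [hg' H]
  rw [hp₀]
  simp only [Matrix.add_mul, Matrix.mul_add, Matrix.neg_mul, Matrix.mul_neg, neg_neg,
    Matrix.add_mulVec, Matrix.neg_mulVec, Matrix.mulVec_add, Matrix.mulVec_neg,
    Matrix.mulVec_sub, Matrix.sub_mulVec, ← Matrix.mulVec_mulVec, hker, n4,
    Matrix.mulVec_zero, add_zero, zero_add, neg_zero, sub_zero, zero_sub]
  simp only [n3]
  abel
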